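/- For each z > 0 there exists a unique finite nonnegative Borel measure ϑ_e^z on ℍ₊ such that ϑ_e^z([x,∞)×[y,∞)) = α ∫₀^∞ ϑ([x + u z⁻¹, ∞) × [y + u, ∞)) du for all x ∈ [0,∞) and y ∈ ℝ; moreover, this measure is given explicitly by ϑ_e^z(B) = α ∫₀^∞ ϑ(B + (u z⁻¹, u)) du for every Borel set B ⊆ ℍ₊. -/
import Mathlib


open MeasureTheory Set Filter Topology

noncomputable section

/-- The right half-plane `ℍ₊ = [0,∞) × ℝ`, as a subset of `ℝ × ℝ`. -/
def Hplus : Set (ℝ × ℝ) := {p | 0 ≤ p.1}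

/-- Translation of a set: `B + w = {b + w : b ∈ B}`. -/
def shiftSet (B : Set (ℝ × ℝ)) (w : ℝ × ℝ) : Set (ℝ × ℝ) := (fun b => b + w) '' B

lemma shiftSet_eq_preimage (B : Set (ℝ × ℝ)) (w : ℝ × ℝ) :
    shiftSet B w = (fun p => p - w) ⁻¹' B := by
  ext p
  constructor
  · rintro ⟨b, hb, rfl⟩; simpa using hb
  · intro hp; exact ⟨p - w, hp, by simp⟩

lemma measurableSet_Hplus : MeasurableSet Hplus :=
  measurableSet_le measurable_const measurable_fst

/-- for each `z > 0` there is a unique finite Borel measure on `ℍ₊`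
satisfying the rectangle formula, and it is given by the explicit formula on all
Borel subsets of `ℍ₊`. -/
theorem stmt_0 (α : ℝ) (hα : 0 < α) (ϑ : Measure (ℝ × ℝ)) [IsProbabilityMeasure ϑ]
    (hϑsupp : ϑ {p : ℝ × ℝ | p.1 < 0} = 0)
    (hϑ0 : ϑ {p : ℝ × ℝ | p.1 = 0} = 0)
    (hϑmean : ∫⁻ p, ENNReal.ofReal p.1 ∂ϑ = ENNReal.ofReal α⁻¹)
    (z : ℝ) (hz : 0 < z) :
    (∃! τ : Measure (ℝ × ℝ),
      IsFiniteMeasure τ ∧ τ {p : ℝ × ℝ | p.1 < 0} = 0 ∧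
      ∀ x : ℝ, 0 ≤ x → ∀ y : ℝ,
        τ (Ici x ×ˢ Ici y)
          = ENNReal.ofReal α * ∫⁻ u in Ioi (0 : ℝ), ϑ (Ici (x + u / z) ×ˢ Ici (y + u))) ∧
    (∀ τ : Measure (ℝ × ℝ),
      (IsFiniteMeasure τ ∧ τ {p : ℝ × ℝ | p.1 < 0} = 0 ∧
        ∀ x : ℝ, 0 ≤ x → ∀ y : ℝ,
          τ (Ici x ×ˢ Ici y)
            = ENNReal.ofReal α * ∫⁻ u in Ioi (0 : ℝ), ϑ (Ici (x + u / z) ×ˢ Ici (y + u))) →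
      ∀ B : Set (ℝ × ℝ), MeasurableSet B → B ⊆ Hplus →
        τ B = ENNReal.ofReal α * ∫⁻ u in Ioi (0 : ℝ), ϑ (shiftSet B (u / z, u))) := by
  -- the underlying map and base measure
  set f : ℝ × (ℝ × ℝ) → ℝ × ℝ := fun q => q.2 - (q.1 / z, q.1) with hf
  have hfm : Measurable f := by
    apply measurable_snd.sub
    exact (measurable_fst.div_const z).prodMk measurable_fst
  set ν : Measure (ℝ × ℝ) := Measure.map f ((volume.restrict (Ioi (0:ℝ))).prod ϑ) with hν
  -- formula for ν on measurable sets
  have hνapp : ∀ B : Set (ℝ × ℝ), MeasurableSet B →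
      ν B = ∫⁻ u in Ioi (0:ℝ), ϑ (shiftSet B (u / z, u)) := by
    intro B hB
    rw [hν, Measure.map_apply hfm hB, Measure.prod_apply (hfm hB)]
    refine lintegral_congr fun u => ?_
    congr 1
    ext p
    simp [shiftSet_eq_preimage, hf]
  -- shifts of rectangles and of Hplus
  have hshiftRect : ∀ a b c d : ℝ,
      shiftSet (Ici a ×ˢ Ici b) (c, d) = Ici (a + c) ×ˢ Ici (b + d) := by
    intro a b c d
    rw [shiftSet_eq_preimage]
    ext p
    simp only [mem_preimage, mem_prod, mem_Ici, Prod.fst_sub, Prod.snd_sub]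
    constructor <;> rintro ⟨h1, h2⟩ <;> constructor <;> linarith
  have hshiftH : ∀ c d : ℝ, shiftSet Hplus (c, d) = {p : ℝ × ℝ | c ≤ p.1} := by
    intro c d
    rw [shiftSet_eq_preimage]
    ext p
    simp [Hplus, sub_nonneg]
  -- value of ν on Hplus
  have hνH : ν Hplus = ENNReal.ofReal z * ENNReal.ofReal α⁻¹ := by
    rw [hνapp Hplus measurableSet_Hplus]
    have h1 : ∀ u : ℝ, shiftSet Hplus (u / z, u) = {p : ℝ × ℝ | u ≤ z * p.1} := by
      intro u
      rw [hshiftH]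
      ext p
      simp only [mem_setOf_eq]
      rw [div_le_iff₀ hz, mul_comm]
    have hnn : 0 ≤ᵐ[ϑ] fun p : ℝ × ℝ => z * p.1 := by
      have h0 : ∀ᵐ p ∂ϑ, 0 ≤ p.1 := by
        rw [ae_iff]
        convert hϑsupp using 2
        ext p
        simp [not_le]
      filter_upwards [h0] with p hp
      exact mul_nonneg hz.le hp
    have hmble : AEMeasurable (fun p : ℝ × ℝ => z * p.1) ϑ :=
      (measurable_const.mul measurable_fst).aemeasurable
    calc ∫⁻ u in Ioi (0:ℝ), ϑ (shiftSet Hplus (u / z, u))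
        = ∫⁻ u in Ioi (0:ℝ), ϑ {p : ℝ × ℝ | u ≤ z * p.1} := by
          exact lintegral_congr fun u => by rw [h1]
      _ = ∫⁻ p, ENNReal.ofReal (z * p.1) ∂ϑ :=
          (lintegral_eq_lintegral_meas_le ϑ hnn hmble).symm
      _ = ENNReal.ofReal z * ∫⁻ p, ENNReal.ofReal p.1 ∂ϑ := by
          simp_rw [ENNReal.ofReal_mul hz.le]
          exact lintegral_const_mul _ (ENNReal.measurable_ofReal.comp measurable_fst)
      _ = ENNReal.ofReal z * ENNReal.ofReal α⁻¹ := by rw [hϑmean]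
  -- the candidate measure
  set τ₀ : Measure (ℝ × ℝ) := ENNReal.ofReal α • (ν.restrict Hplus) with hτ₀
  have hτ₀app : ∀ B : Set (ℝ × ℝ), MeasurableSet B → B ⊆ Hplus →
      τ₀ B = ENNReal.ofReal α * ∫⁻ u in Ioi (0:ℝ), ϑ (shiftSet B (u / z, u)) := by
    intro B hB hBsub
    rw [hτ₀, Measure.smul_apply, smul_eq_mul, Measure.restrict_apply hB,
      inter_eq_self_of_subset_left hBsub, hνapp B hB]
  have hτ₀null : τ₀ {p : ℝ × ℝ | p.1 < 0} = 0 := by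
    rw [hτ₀, Measure.smul_apply, smul_eq_mul,
      Measure.restrict_apply (measurableSet_lt measurable_fst measurable_const)]
    have : {p : ℝ × ℝ | p.1 < 0} ∩ Hplus = ∅ := by
      ext p; simp only [Hplus, mem_inter_iff, mem_setOf_eq, mem_empty_iff_false, iff_false]
      rintro ⟨h1, h2⟩; linarith
    rw [this, measure_empty, mul_zero]
  have hτ₀fin : IsFiniteMeasure τ₀ := by
    constructor
    rw [hτ₀, Measure.smul_apply, smul_eq_mul, Measure.restrict_apply_univ, hνH]
    exact ENNReal.mul_lt_top ENNReal.ofReal_lt_top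
      (ENNReal.mul_lt_top ENNReal.ofReal_lt_top ENNReal.ofReal_lt_top)
  have hτ₀rect : ∀ x : ℝ, 0 ≤ x → ∀ y : ℝ,
      τ₀ (Ici x ×ˢ Ici y)
        = ENNReal.ofReal α * ∫⁻ u in Ioi (0:ℝ), ϑ (Ici (x + u / z) ×ˢ Ici (y + u)) := by
    intro x hx y
    have hsub : Ici x ×ˢ Ici y ⊆ Hplus := fun p hp => le_trans hx hp.1
    rw [hτ₀app _ (measurableSet_Ici.prod measurableSet_Ici) hsub]
    congr 1
    exact lintegral_congr fun u => by rw [hshiftRect]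
  -- uniqueness: any measure satisfying the properties equals τ₀
  have huniq : ∀ τ : Measure (ℝ × ℝ),
      (IsFiniteMeasure τ ∧ τ {p : ℝ × ℝ | p.1 < 0} = 0 ∧
        ∀ x : ℝ, 0 ≤ x → ∀ y : ℝ,
          τ (Ici x ×ˢ Ici y)
            = ENNReal.ofReal α * ∫⁻ u in Ioi (0 : ℝ), ϑ (Ici (x + u / z) ×ˢ Ici (y + u))) →
      τ = τ₀ := by
    rintro τ ⟨hfin, hnull, hrect⟩
    haveI := hfin
    -- agreement on all Ici-rectangles
    have hkey : ∀ (μ' : Measure (ℝ × ℝ)), μ' {p : ℝ × ℝ | p.1 < 0} = 0 →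
        ∀ x y : ℝ, μ' (Ici x ×ˢ Ici y) = μ' (Ici (max x 0) ×ˢ Ici y) := by
      intro μ' h0 x y
      have hset : Ici (max x 0) ×ˢ Ici y = (Ici x ×ˢ Ici y) \ {p : ℝ × ℝ | p.1 < 0} := by
        ext p
        simp only [mem_prod, mem_Ici, mem_diff, mem_setOf_eq, not_lt, max_le_iff]
        tauto
      rw [hset, measure_diff_null h0]
    have hagree : ∀ x y : ℝ, τ (Ici x ×ˢ Ici y) = τ₀ (Ici x ×ˢ Ici y) := by
      intro x y
      rw [hkey τ hnull, hkey τ₀ hτ₀null,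
        hrect _ (le_max_right x 0) y, hτ₀rect _ (le_max_right x 0) y]
    -- agreement on univ
    have hunivagree : τ univ = τ₀ univ := by
      have h1 : ∀ (μ' : Measure (ℝ × ℝ)), μ' {p : ℝ × ℝ | p.1 < 0} = 0 →
          μ' univ = μ' Hplus := by
        intro μ' h0
        have : Hplus = univ \ {p : ℝ × ℝ | p.1 < 0} := by
          ext p; simp [Hplus, not_lt]
        rw [this, measure_diff_null h0]
      have hmono : Monotone (fun n : ℕ => Ici (0:ℝ) ×ˢ Ici (-(n:ℝ))) := by
        intro m n hmn
        refine prod_mono subset_rfl (Ici_subset_Ici.mpr ?_)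
        have : (m:ℝ) ≤ n := Nat.cast_le.mpr hmn
        linarith
      have hHeq : Hplus = ⋃ n : ℕ, Ici (0:ℝ) ×ˢ Ici (-(n:ℝ)) := by
        ext p
        simp only [Hplus, mem_setOf_eq, mem_iUnion, mem_prod, mem_Ici]
        constructor
        · intro hp
          obtain ⟨n, hn⟩ := exists_nat_ge (-p.2)
          exact ⟨n, hp, by linarith⟩
        · rintro ⟨n, hn, -⟩; exact hn
      rw [h1 τ hnull, h1 τ₀ hτ₀null, hHeq, hmono.measure_iUnion, hmono.measure_iUnion]
      exact iSup_congr fun n => hagree 0 (-(n:ℝ))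
    -- extend agreement to all Borel sets via the π-system of Ici-rectangles
    have hspan : IsCountablySpanning (range (Ici : ℝ → Set ℝ)) := by
      refine ⟨fun n => Ici (-(n:ℝ)), fun n => mem_range_self _, ?_⟩
      ext x
      simp only [mem_iUnion, mem_Ici, mem_univ, iff_true]
      obtain ⟨n, hn⟩ := exists_nat_ge (-x)
      exact ⟨n, by linarith⟩
    have hb : (inferInstance : MeasurableSpace ℝ)
        = MeasurableSpace.generateFrom (range (Ici : ℝ → Set ℝ)) :=
      BorelSpace.measurable_eq.trans (borel_eq_generateFrom_Ici ℝ)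
    have hgen : (inferInstance : MeasurableSpace (ℝ × ℝ))
        = MeasurableSpace.generateFrom
            (image2 (· ×ˢ ·) (range (Ici : ℝ → Set ℝ)) (range (Ici : ℝ → Set ℝ))) := by
      rw [← generateFrom_prod_eq hspan hspan, ← hb]
    refine ext_of_generate_finite _ hgen (isPiSystem_Ici.prod isPiSystem_Ici) ?_ hunivagree
    rintro _ ⟨_, ⟨x, rfl⟩, _, ⟨y, rfl⟩, rfl⟩
    exact hagree x y
  refine ⟨⟨τ₀, ⟨hτ₀fin, hτ₀null, hτ₀rect⟩, fun τ h => huniq τ h⟩, ?_⟩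
  intro τ h B hB hBsub
  rw [huniq τ h]
  exact hτ₀app B hB hBsub
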